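/- Let f : [0,1] → ℝ be in L²([0,1]) and of bounded variation with total variation ‖f‖_BV. Let F_N(f) denote the N-th partial sum of the Haar wavelet expansion of f, i.e. F_N(f) = ⟨f,1⟩ + Σ_{k=0}^{N} Σ_{j=0}^{2^k−1} ⟨f, b_{kj}⟩ b_{kj} / ‖b_{kj}‖²_{L²}. Then ‖f − F_N(f)‖_{L²} ≤ (1/2)(1/√2)^N ‖f‖_BV. -/

import Mathlib

open MeasureTheory Set

/-- The Haar mother wavelet: 1 on [0,1/2), -1 on [1/2,1), 0 otherwise. -/
noncomputable def haarMother : ℝ → ℝ :=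
  fun t => if t ∈ Set.Ico (0:ℝ) (1/2) then 1 else if t ∈ Set.Ico (1/2:ℝ) 1 then -1 else 0

/-- The Haar wavelet `b_{kj}(t) = λ(2^k t - j)`. -/
noncomputable def haar (k j : ℕ) (t : ℝ) : ℝ := haarMother (2 ^ k * t - j)

/-- The `N`-th partial sum of the Haar wavelet expansion of `f`:
`F_N(f) = ⟨f,1⟩ + Σ_{k=0}^{N} Σ_{j=0}^{2^k-1} ⟨f, b_{kj}⟩ b_{kj} / ‖b_{kj}‖²`. -/
noncomputable def haarPartialSum (N : ℕ) (f : ℝ → ℝ) (t : ℝ) : ℝ :=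
  (∫ s in (0:ℝ)..1, f s) +
    ∑ k ∈ Finset.range (N + 1), ∑ j ∈ Finset.range (2 ^ k),
      (∫ s in (0:ℝ)..1, f s * haar k j s) * haar k j t /
        (∫ s in (0:ℝ)..1, (haar k j s) ^ 2)

section HaarLemmas

lemma haar_eq_one {k j : ℕ} {t : ℝ} (h1 : (2*(j:ℝ))/2^(k+1) ≤ t)
    (h2 : t < (2*(j:ℝ)+1)/2^(k+1)) : haar k j t = 1 := by
  have hp : (0:ℝ) < 2^(k+1) := by positivity
  have hs : (2:ℝ)^(k+1) = 2^k * 2 := by rw [pow_succ]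
  rw [div_le_iff₀ hp] at h1
  rw [lt_div_iff₀ hp] at h2
  have hmem : 2 ^ k * t - (j:ℝ) ∈ Set.Ico (0:ℝ) (1/2) := by
    constructor <;> nlinarith
  show haarMother _ = 1
  rw [haarMother, if_pos hmem]

lemma haar_eq_neg_one {k j : ℕ} {t : ℝ} (h1 : (2*(j:ℝ)+1)/2^(k+1) ≤ t)
    (h2 : t < (2*(j:ℝ)+2)/2^(k+1)) : haar k j t = -1 := by
  have hp : (0:ℝ) < 2^(k+1) := by positivity
  have hs : (2:ℝ)^(k+1) = 2^k * 2 := by rw [pow_succ]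
  rw [div_le_iff₀ hp] at h1
  rw [lt_div_iff₀ hp] at h2
  have hmem1 : 2 ^ k * t - (j:ℝ) ∉ Set.Ico (0:ℝ) (1/2) := by
    rw [Set.mem_Ico]; push_neg; intro _; nlinarith
  have hmem2 : 2 ^ k * t - (j:ℝ) ∈ Set.Ico (1/2:ℝ) 1 := by
    constructor <;> nlinarith
  show haarMother _ = -1
  rw [haarMother, if_neg hmem1, if_pos hmem2]

lemma haar_eq_zero {k j : ℕ} {t : ℝ}
    (h : t < (2*(j:ℝ))/2^(k+1) ∨ (2*(j:ℝ)+2)/2^(k+1) ≤ t) : haar k j t = 0 := by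
  have hp : (0:ℝ) < 2^(k+1) := by positivity
  have hs : (2:ℝ)^(k+1) = 2^k * 2 := by rw [pow_succ]
  rcases h with h | h
  · rw [lt_div_iff₀ hp] at h
    have hmem1 : 2 ^ k * t - (j:ℝ) ∉ Set.Ico (0:ℝ) (1/2) := by
      rw [Set.mem_Ico]; push_neg; intro h'; exfalso; nlinarith
    have hmem2 : 2 ^ k * t - (j:ℝ) ∉ Set.Ico (1/2:ℝ) 1 := by
      rw [Set.mem_Ico]; push_neg; intro h'; exfalso; nlinarith
    show haarMother _ = 0
    rw [haarMother, if_neg hmem1, if_neg hmem2]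
  · rw [div_le_iff₀ hp] at h
    have hmem1 : 2 ^ k * t - (j:ℝ) ∉ Set.Ico (0:ℝ) (1/2) := by
      rw [Set.mem_Ico]; push_neg; intro _; nlinarith
    have hmem2 : 2 ^ k * t - (j:ℝ) ∉ Set.Ico (1/2:ℝ) 1 := by
      rw [Set.mem_Ico]; push_neg; intro _; nlinarith
    show haarMother _ = 0
    rw [haarMother, if_neg hmem1, if_neg hmem2]

lemma inter_Ioc_ae {a b : ℝ} (ha : 0 ≤ a) (hab : a ≤ b) (hb : b ≤ 1) :
    (Set.Ioc (0:ℝ) 1 ∩ Set.Ico a b : Set ℝ) =ᵐ[volume] Set.Ioc a b := by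
  rw [MeasureTheory.ae_eq_set]
  constructor
  · apply measure_mono_null (t := {a}) ?_ (measure_singleton a)
    intro x hx
    simp only [Set.mem_diff, Set.mem_inter_iff, Set.mem_Ioc, Set.mem_Ico,
      Set.mem_singleton_iff, not_and, not_le] at hx ⊢
    obtain ⟨⟨⟨h0, h1⟩, h2, h3⟩, h4⟩ := hx
    by_contra hne
    have hax : a < x := lt_of_le_of_ne h2 (Ne.symm hne)
    exact absurd (h4 hax) (not_lt.mpr h3.le)
  · apply measure_mono_null (t := {b}) ?_ (measure_singleton b)
    intro x hx
    simp only [Set.mem_diff, Set.mem_inter_iff, Set.mem_Ioc, Set.mem_Ico,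
      Set.mem_singleton_iff, not_and, not_lt] at hx ⊢
    obtain ⟨⟨hax, hxb⟩, h⟩ := hx
    by_cases hx1 : 0 < x
    · by_cases hx2 : x ≤ 1
      · exact le_antisymm hxb (h ⟨hx1, hx2⟩ hax.le)
      · linarith
    · linarith
  
lemma integral_indicator_Ico {f : ℝ → ℝ} {a b : ℝ} (ha : 0 ≤ a) (hab : a ≤ b) (hb : b ≤ 1) :
    ∫ s in Set.Ioc (0:ℝ) 1, (Set.Ico a b).indicator f s =
      ∫ s in a..b, f s := by
  rw [MeasureTheory.setIntegral_indicator measurableSet_Ico,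
    MeasureTheory.setIntegral_congr_set (inter_Ioc_ae ha hab hb),
    intervalIntegral.integral_of_le hab]

lemma haar_endpoints_bound {k j : ℕ} (hj : j < 2^k) :
    0 ≤ (2*(j:ℝ))/2^(k+1) ∧
    (2*(j:ℝ))/2^(k+1) ≤ (2*(j:ℝ)+1)/2^(k+1) ∧
    (2*(j:ℝ)+1)/2^(k+1) ≤ (2*(j:ℝ)+2)/2^(k+1) ∧
    (2*(j:ℝ)+2)/2^(k+1) ≤ 1 := by
  have hp : (0:ℝ) < 2^(k+1) := by positivity
  have hjr : (j:ℝ) + 1 ≤ 2^k := by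
    have : ((j+1 : ℕ) : ℝ) ≤ ((2^k : ℕ) : ℝ) := Nat.cast_le.mpr hj
    push_cast at this; linarith
  have hs : (2:ℝ)^(k+1) = 2^k * 2 := by rw [pow_succ]
  refine ⟨by positivity, ?_, ?_, ?_⟩
  · gcongr; linarith
  · gcongr; linarith
  · rw [div_le_one hp]; nlinarith

lemma haar_sq_eq_indicator (k j : ℕ) (s : ℝ) :
    haar k j s ^ 2 =
      (Set.Ico ((2*(j:ℝ))/2^(k+1)) ((2*(j:ℝ)+2)/2^(k+1))).indicator (fun _ => (1:ℝ)) s := by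
  set a := (2*(j:ℝ))/2^(k+1)
  set m := (2*(j:ℝ)+1)/2^(k+1)
  set b := (2*(j:ℝ)+2)/2^(k+1)
  by_cases h1 : s < a
  · rw [haar_eq_zero (Or.inl h1), Set.indicator_of_notMem (by rw [Set.mem_Ico]; push_neg; intro h; linarith)]
    ring
  · by_cases h2 : b ≤ s
    · rw [haar_eq_zero (Or.inr h2), Set.indicator_of_notMem (by rw [Set.mem_Ico]; push_neg; intro h; linarith)]
      ring
    · push_neg at h1 h2
      rw [Set.indicator_of_mem (Set.mem_Ico.mpr ⟨h1, h2⟩)]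
      by_cases h3 : s < m
      · rw [haar_eq_one h1 h3]; ring
      · push_neg at h3
        rw [haar_eq_neg_one h3 h2]; ring

lemma integral_haar_sq {k j : ℕ} (hj : j < 2^k) :
    ∫ s in (0:ℝ)..1, haar k j s ^ 2 = ((2:ℝ)^k)⁻¹ := by
  obtain ⟨h0, h1, h2, h3⟩ := haar_endpoints_bound hj
  set a := (2*(j:ℝ))/2^(k+1) with ha
  set b := (2*(j:ℝ)+2)/2^(k+1) with hb
  rw [intervalIntegral.integral_of_le (by norm_num)]
  calc ∫ s in Set.Ioc (0:ℝ) 1, haar k j s ^ 2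
      = ∫ s in Set.Ioc (0:ℝ) 1, (Set.Ico a b).indicator (fun _ => (1:ℝ)) s := by
        simp_rw [haar_sq_eq_indicator k j]; rfl
    _ = ∫ s in a..b, (1:ℝ) := integral_indicator_Ico h0 (h1.trans h2) h3
    _ = b - a := by simp
    _ = ((2:ℝ)^k)⁻¹ := by
        rw [hb, ha]
        have hp : (0:ℝ) < 2^(k+1) := by positivity
        field_simp
        ring

lemma haar_mul_eq (k j : ℕ) (f : ℝ → ℝ) (s : ℝ) :
    f s * haar k j s =
      (Set.Ico ((2*(j:ℝ))/2^(k+1)) ((2*(j:ℝ)+1)/2^(k+1))).indicator f s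
      - (Set.Ico ((2*(j:ℝ)+1)/2^(k+1)) ((2*(j:ℝ)+2)/2^(k+1))).indicator f s := by
  set a := (2*(j:ℝ))/2^(k+1)
  set m := (2*(j:ℝ)+1)/2^(k+1)
  set b := (2*(j:ℝ)+2)/2^(k+1)
  have ham : a ≤ m := by unfold a m; gcongr; linarith
  have hmb : m ≤ b := by unfold m b; gcongr; linarith
  by_cases h1 : s < a
  · rw [haar_eq_zero (Or.inl h1),
      Set.indicator_of_notMem (by rw [Set.mem_Ico]; push_neg; intro h; linarith),
      Set.indicator_of_notMem (by rw [Set.mem_Ico]; push_neg; intro h; linarith)]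
    ring
  · by_cases h2 : b ≤ s
    · rw [haar_eq_zero (Or.inr h2),
        Set.indicator_of_notMem (by rw [Set.mem_Ico]; push_neg; intro h; linarith),
        Set.indicator_of_notMem (by rw [Set.mem_Ico]; push_neg; intro h; linarith)]
      ring
    · push_neg at h1 h2
      by_cases h3 : s < m
      · rw [haar_eq_one h1 h3, Set.indicator_of_mem (Set.mem_Ico.mpr ⟨h1, h3⟩),
          Set.indicator_of_notMem (by rw [Set.mem_Ico]; push_neg; intro h; linarith)]
        ring
      · push_neg at h3
        rw [haar_eq_neg_one h3 h2, Set.indicator_of_mem (Set.mem_Ico.mpr ⟨h3, h2⟩),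
          Set.indicator_of_notMem (by rw [Set.mem_Ico]; push_neg; intro h; linarith)]
        ring

lemma integral_mul_haar {k j : ℕ} (hj : j < 2^k) {f : ℝ → ℝ}
    (hf : MeasureTheory.IntegrableOn f (Set.Ioc (0:ℝ) 1) volume) :
    ∫ s in (0:ℝ)..1, f s * haar k j s =
      (∫ s in ((2*(j:ℝ))/2^(k+1))..((2*(j:ℝ)+1)/2^(k+1)), f s)
      - ∫ s in ((2*(j:ℝ)+1)/2^(k+1))..((2*(j:ℝ)+2)/2^(k+1)), f s := by
  obtain ⟨h0, h1, h2, h3⟩ := haar_endpoints_bound hj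
  rw [intervalIntegral.integral_of_le (by norm_num)]
  calc ∫ s in Set.Ioc (0:ℝ) 1, f s * haar k j s
      = ∫ s in Set.Ioc (0:ℝ) 1,
          ((Set.Ico ((2*(j:ℝ))/2^(k+1)) ((2*(j:ℝ)+1)/2^(k+1))).indicator f s
          - (Set.Ico ((2*(j:ℝ)+1)/2^(k+1)) ((2*(j:ℝ)+2)/2^(k+1))).indicator f s) := by
        simp_rw [haar_mul_eq k j f]
    _ = (∫ s in Set.Ioc (0:ℝ) 1,
          (Set.Ico ((2*(j:ℝ))/2^(k+1)) ((2*(j:ℝ)+1)/2^(k+1))).indicator f s)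
        - ∫ s in Set.Ioc (0:ℝ) 1,
          (Set.Ico ((2*(j:ℝ)+1)/2^(k+1)) ((2*(j:ℝ)+2)/2^(k+1))).indicator f s :=
        MeasureTheory.integral_sub (hf.indicator measurableSet_Ico)
          (hf.indicator measurableSet_Ico)
    _ = _ := by
        rw [integral_indicator_Ico h0 h1 (h2.trans h3),
          integral_indicator_Ico (h0.trans h1) h2 h3]

lemma intervalIntegrable_of_Ioc {f : ℝ → ℝ} {a b : ℝ} (ha : 0 ≤ a) (hab : a ≤ b) (hb : b ≤ 1)
    (hf : MeasureTheory.IntegrableOn f (Set.Ioc (0:ℝ) 1) volume) :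
    IntervalIntegrable f volume a b := by
  rw [intervalIntegrable_iff_integrableOn_Ioc_of_le hab]
  exact hf.mono_set (Set.Ioc_subset_Ioc ha hb)

lemma partial_sum_eq_avg (f : ℝ → ℝ)
    (hf : MeasureTheory.IntegrableOn f (Set.Ioc (0:ℝ) 1) volume) :
    ∀ K : ℕ, ∀ m : ℕ, m < 2^K → ∀ t : ℝ, (m:ℝ)/2^K ≤ t → t < ((m:ℝ)+1)/2^K →
    ((∫ s in (0:ℝ)..1, f s) +
      ∑ k ∈ Finset.range K, ∑ j ∈ Finset.range (2 ^ k),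
        (∫ s in (0:ℝ)..1, f s * haar k j s) * haar k j t /
          (∫ s in (0:ℝ)..1, (haar k j s) ^ 2))
      = 2^K * ∫ s in ((m:ℝ)/2^K)..(((m:ℝ)+1)/2^K), f s := by
  intro K
  induction K with
  | zero =>
    intro m hm t _ _
    interval_cases m
    norm_num
  | succ K ih =>
    intro m hm t ht1 ht2
    set q := m / 2 with hq
    have hq2 : q < 2^K := by
      rw [hq, Nat.div_lt_iff_lt_mul (by norm_num)]
      calc m < 2^(K+1) := hm
        _ = 2^K * 2 := by rw [pow_succ]
    have hmq : m = 2*q ∨ m = 2*q + 1 := by omega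
    have hp : (0:ℝ) < 2^(K+1) := by positivity
    have hpK : (0:ℝ) < 2^K := by positivity
    have hs2 : (2:ℝ)^(K+1) = 2^K * 2 := by rw [pow_succ]
    -- endpoints
    set A := (2*(q:ℝ))/2^(K+1) with hA
    set M := (2*(q:ℝ)+1)/2^(K+1) with hM
    set B := (2*(q:ℝ)+2)/2^(K+1) with hB
    obtain ⟨e0, e1, e2, e3⟩ := haar_endpoints_bound hq2
    -- t is in [A, B)
    have htA : A ≤ t := by
      rcases hmq with h | h
      · rw [h] at ht1; push_cast at ht1; rw [hA]; convert ht1 using 2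
      · refine le_trans ?_ ht1
        rw [h, hA]; push_cast; gcongr
    have htB : t < B := by
      rcases hmq with h | h
      · refine lt_of_lt_of_le ht2 ?_
        rw [h, hB]; push_cast; gcongr
      · rw [h] at ht2; push_cast at ht2; rw [hB]; convert ht2 using 2; ring
    -- the interval [q/2^K, (q+1)/2^K) coincides with [A, B)
    have eqA : ((q:ℝ))/2^K = A := by rw [hA, hs2]; ring
    have eqB : ((q:ℝ)+1)/2^K = B := by rw [hB, hs2]; field_simp
    -- IH
    have hIH := ih q hq2 t (by rw [eqA]; exact htA) (by rw [eqB]; exact htB)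
    -- split sum
    rw [Finset.sum_range_succ, ← add_assoc, hIH]
    -- collapse inner sum to j = q
    have hcollapse : ∑ j ∈ Finset.range (2 ^ K),
        (∫ s in (0:ℝ)..1, f s * haar K j s) * haar K j t /
          (∫ s in (0:ℝ)..1, (haar K j s) ^ 2)
        = (∫ s in (0:ℝ)..1, f s * haar K q s) * haar K q t /
          (∫ s in (0:ℝ)..1, (haar K q s) ^ 2) := by
      apply Finset.sum_eq_single_of_mem q (Finset.mem_range.mpr hq2)
      intro j _ hjq
      have hz : haar K j t = 0 := by
        apply haar_eq_zero
        rcases Nat.lt_or_ge j q with h | h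
        · right
          refine le_trans ?_ htA
          rw [hA]
          gcongr ?_ / ?_
          · have : (j:ℝ) + 1 ≤ q := by exact_mod_cast Nat.succ_le_of_lt h
            linarith
        · have h' : q < j := lt_of_le_of_ne h (Ne.symm hjq)
          left
          refine lt_of_lt_of_le htB ?_
          rw [hB]
          gcongr ?_ / ?_
          · have : (q:ℝ) + 1 ≤ j := by exact_mod_cast Nat.succ_le_of_lt h'
            linarith
      rw [hz]
      ring
    rw [hcollapse, integral_haar_sq hq2, integral_mul_haar hq2 hf]
    -- split the integral over [A,B] at M
    have hint1 : IntervalIntegrable f volume A M := intervalIntegrable_of_Ioc e0 e1 (e2.trans e3) hf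
    have hint2 : IntervalIntegrable f volume M B := intervalIntegrable_of_Ioc (e0.trans e1) e2 e3 hf
    have hsplit : ∫ s in ((q:ℝ)/2^K)..(((q:ℝ)+1)/2^K), f s
        = (∫ s in A..M, f s) + ∫ s in M..B, f s := by
      rw [eqA, eqB]
      exact (intervalIntegral.integral_add_adjacent_intervals hint1 hint2).symm
    rw [hsplit]
    rw [← hA, ← hM, ← hB]
    -- now case on parity of m
    rcases hmq with h | h
    · have hm1 : (m:ℝ)/2^(K+1) = A := by rw [h, hA]; push_cast; ring
      have hm2 : ((m:ℝ)+1)/2^(K+1) = M := by rw [h, hM]; push_cast; ring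
      have htM : t < M := hm2 ▸ ht2
      rw [hm1, hm2, haar_eq_one htA (hM ▸ htM), hs2]
      field_simp
      ring
    · have hm1 : (m:ℝ)/2^(K+1) = M := by rw [h, hM]; push_cast; ring
      have hm2 : ((m:ℝ)+1)/2^(K+1) = B := by rw [h, hB]; push_cast; ring
      have htM : M ≤ t := hm1 ▸ ht1
      rw [hm1, hm2, haar_eq_neg_one (hM ▸ htM) htB, hs2]
      field_simp
      ring

lemma sq_sub_const_integrable {f : ℝ → ℝ} {a b : ℝ}
    (hf1 : IntervalIntegrable f volume a b)
    (hf2 : IntervalIntegrable (fun t => (f t)^2) volume a b) (c : ℝ) :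
    IntervalIntegrable (fun t => (f t - c)^2) volume a b := by
  have h1 : (fun t => (f t - c)^2) = fun t => ((f t)^2 - (2*c)*f t) + c^2 :=
    funext fun t => by ring
  rw [h1]
  exact (hf2.sub (hf1.const_mul (2*c))).add (intervalIntegrable_const)

lemma expand_sq_integral {f : ℝ → ℝ} {a b : ℝ}
    (hf1 : IntervalIntegrable f volume a b)
    (hf2 : IntervalIntegrable (fun t => (f t)^2) volume a b) (d : ℝ) :
    ∫ t in a..b, (f t - d)^2 =
      (∫ t in a..b, (f t)^2) - 2*d*(∫ t in a..b, f t) + (b-a)*d^2 := by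
  have h1 : (fun t => (f t - d)^2) = fun t => ((f t)^2 - (2*d)*f t) + d^2 :=
    funext fun t => by ring
  rw [h1, intervalIntegral.integral_add (hf2.sub (hf1.const_mul (2*d)))
      intervalIntegrable_const,
    intervalIntegral.integral_sub hf2 (hf1.const_mul (2*d)),
    intervalIntegral.integral_const_mul, intervalIntegral.integral_const]
  simp [smul_eq_mul]

lemma dist_le_variation {f : ℝ → ℝ} {a b : ℝ} (hBV : BoundedVariationOn f (Set.Icc a b))
    {x y : ℝ} (hx : x ∈ Set.Icc a b) (hy : y ∈ Set.Icc a b) :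
    |f x - f y| ≤ (eVariationOn f (Set.Icc a b)).toReal := by
  have h1 : edist (f x) (f y) ≤ eVariationOn f (Set.Icc a b) := eVariationOn.edist_le f hx hy
  have h2 := ENNReal.toReal_mono hBV h1
  rwa [← dist_edist, Real.dist_eq] at h2

/-- The key per-interval estimate. -/
lemma interval_variance_bound {f : ℝ → ℝ} {a b : ℝ} (hab : a < b)
    (hf1 : IntervalIntegrable f volume a b)
    (hf2 : IntervalIntegrable (fun t => (f t)^2) volume a b)
    (hBV : BoundedVariationOn f (Set.Icc a b)) :
    ∫ t in a..b, (f t - (∫ s in a..b, f s)/(b-a))^2 ≤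
      (b-a) * ((eVariationOn f (Set.Icc a b)).toReal / 2)^2 := by
  set W := (eVariationOn f (Set.Icc a b)).toReal with hW
  have hW0 : 0 ≤ W := ENNReal.toReal_nonneg
  set c := (∫ s in a..b, f s)/(b-a) with hc
  have hne : Set.Nonempty (f '' Set.Icc a b) :=
    ⟨f a, ⟨a, Set.left_mem_Icc.mpr hab.le, rfl⟩⟩
  have hbdd : ∀ z ∈ f '' Set.Icc a b, z ≤ f a + W := by
    rintro z ⟨x, hx, rfl⟩
    have := dist_le_variation hBV hx (Set.left_mem_Icc.mpr hab.le)
    rw [abs_le] at this; linarith [this.2]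
  have hbddb : ∀ z ∈ f '' Set.Icc a b, f a - W ≤ z := by
    rintro z ⟨x, hx, rfl⟩
    have := dist_le_variation hBV hx (Set.left_mem_Icc.mpr hab.le)
    rw [abs_le] at this; linarith [this.1]
  set L := sInf (f '' Set.Icc a b) with hL
  set Msup := sSup (f '' Set.Icc a b) with hMs
  have hbddA : BddAbove (f '' Set.Icc a b) := ⟨f a + W, fun z hz => hbdd z hz⟩
  have hbddB : BddBelow (f '' Set.Icc a b) := ⟨f a - W, fun z hz => hbddb z hz⟩
  have hLle : ∀ x ∈ Set.Icc a b, L ≤ f x := fun x hx => csInf_le hbddB ⟨x, hx, rfl⟩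
  have hleM : ∀ x ∈ Set.Icc a b, f x ≤ Msup := fun x hx => le_csSup hbddA ⟨x, hx, rfl⟩
  have hML : Msup - L ≤ W := by
    have h1 : Msup ≤ L + W := by
      apply csSup_le hne
      rintro z ⟨x, hx, rfl⟩
      have h2 : f x - W ≤ L := by
        apply le_csInf hne
        rintro w ⟨y, hy, rfl⟩
        have := dist_le_variation hBV hx hy
        rw [abs_le] at this; linarith [this.2]
      linarith
    linarith
  set mid := (L + Msup)/2 with hmid
  have hptw : ∀ x ∈ Set.Icc a b, (f x - mid)^2 ≤ (W/2)^2 := by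
    intro x hx
    apply sq_le_sq'
    · have := hLle x hx; simp only [hmid]; linarith
    · have := hleM x hx; simp only [hmid]; linarith
  have hint_mid : ∫ t in a..b, (f t - mid)^2 ≤ (b-a) * (W/2)^2 := by
    calc ∫ t in a..b, (f t - mid)^2 ≤ ∫ _t in a..b, (W/2)^2 := by
          apply intervalIntegral.integral_mono_on hab.le
            (sq_sub_const_integrable hf1 hf2 mid) intervalIntegrable_const
          intro x hx
          exact hptw x hx
      _ = (b-a) * (W/2)^2 := by rw [intervalIntegral.integral_const]; simp [smul_eq_mul]
  have hIc : (∫ s in a..b, f s) = c * (b - a) := by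
    rw [hc, div_mul_cancel₀]
    exact (sub_pos.mpr hab).ne'
  calc ∫ t in a..b, (f t - c)^2
      ≤ ∫ t in a..b, (f t - mid)^2 := by
        rw [expand_sq_integral hf1 hf2 c, expand_sq_integral hf1 hf2 mid, hIc]
        nlinarith [sq_nonneg (mid - c), sub_pos.mpr hab]
    _ ≤ (b-a) * (W/2)^2 := hint_mid

lemma sum_eVariation (f : ℝ → ℝ) (a : ℕ → ℝ) (hmono : Monotone a) :
    ∀ m : ℕ, ∑ i ∈ Finset.range m, eVariationOn f (Set.Icc (a i) (a (i+1)))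
      = eVariationOn f (Set.Icc (a 0) (a m)) := by
  intro m
  induction m with
  | zero => simp [Set.Icc_self, eVariationOn.subsingleton f Set.subsingleton_singleton]
  | succ m ih =>
    rw [Finset.sum_range_succ, ih]
    have h1 : a 0 ≤ a m := hmono (Nat.zero_le m)
    have h2 : a m ≤ a (m+1) := hmono (Nat.le_succ m)
    rw [← eVariationOn.union f
        (⟨Set.right_mem_Icc.mpr h1, fun x hx => hx.2⟩ : IsGreatest (Set.Icc (a 0) (a m)) (a m))
        (⟨Set.left_mem_Icc.mpr h2, fun x hx => hx.1⟩ : IsLeast (Set.Icc (a m) (a (m+1))) (a m)),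
      Set.Icc_union_Icc_eq_Icc h1 h2]

end HaarLemmas

/-- If `f ∈ L²([0,1])` is of bounded variation, then
`‖f - F_N(f)‖_{L²} ≤ (1/2)(1/√2)^N ‖f‖_BV`. -/
theorem haar_partial_sum_error (f : ℝ → ℝ) (N : ℕ)
    (hmeas : Measurable f)
    (hL2 : IntervalIntegrable (fun t => (f t) ^ 2) volume 0 1)
    (hBV : BoundedVariationOn f (Set.Icc (0:ℝ) 1)) :
    Real.sqrt (∫ t in (0:ℝ)..1, (f t - haarPartialSum N f t) ^ 2) ≤
      (1 / 2) * (1 / Real.sqrt 2) ^ N * (eVariationOn f (Set.Icc (0:ℝ) 1)).toReal := by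
  set V := (eVariationOn f (Set.Icc (0:ℝ) 1)).toReal with hV
  have hV0 : 0 ≤ V := ENNReal.toReal_nonneg
  have hpn : (0:ℝ) < 2^(N+1) := by positivity
  -- boundedness of f on [0,1]
  have hbound : ∀ t ∈ Set.Icc (0:ℝ) 1, |f t| ≤ |f 0| + V := by
    intro t ht
    have h := dist_le_variation hBV ht (Set.left_mem_Icc.mpr (by norm_num))
    calc |f t| = |(f t - f 0) + f 0| := by ring_nf
      _ ≤ |f t - f 0| + |f 0| := abs_add_le _ _
      _ ≤ |f 0| + V := by rw [← hV] at h; linarith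
  -- integrability of f on (0,1]
  have hfInt : MeasureTheory.IntegrableOn f (Set.Ioc (0:ℝ) 1) volume := by
    apply MeasureTheory.Measure.integrableOn_of_bounded (M := |f 0| + V)
    · rw [Real.volume_Ioc]; exact ENNReal.ofReal_ne_top
    · exact hmeas.aestronglyMeasurable
    · rw [MeasureTheory.ae_restrict_iff' measurableSet_Ioc]
      exact MeasureTheory.ae_of_all _ fun x hx => by
        simpa [Real.norm_eq_abs] using hbound x (Set.Ioc_subset_Icc_self hx)
  have hL2' : MeasureTheory.IntegrableOn (fun t => (f t)^2) (Set.Ioc (0:ℝ) 1) volume := by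
    rw [← intervalIntegrable_iff_integrableOn_Ioc_of_le (by norm_num : (0:ℝ) ≤ 1)]
    exact hL2
  -- dyadic grid
  set a : ℕ → ℝ := fun i => (i:ℝ)/2^(N+1) with ha
  have hmono : Monotone a := by
    intro i j hij
    simp only [ha]
    gcongr
  have ha0 : a 0 = 0 := by simp [ha]
  have ha1 : a (2^(N+1)) = 1 := by
    simp only [ha]; push_cast; rw [div_self hpn.ne']
  have hai : ∀ i : ℕ, i ≤ 2^(N+1) → 0 ≤ a i ∧ a i ≤ 1 := by
    intro i hi
    refine ⟨by positivity, ?_⟩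
    rw [ha]
    simp only
    rw [div_le_one hpn]
    calc ((i:ℕ):ℝ) ≤ ((2^(N+1) : ℕ) : ℝ) := Nat.cast_le.mpr hi
      _ = 2^(N+1) := by push_cast; ring
  have hlen : ∀ i : ℕ, a (i+1) - a i = ((2:ℝ)^(N+1))⁻¹ := by
    intro i
    simp only [ha]
    push_cast
    field_simp
    ring
  have hstrict : ∀ i : ℕ, a i < a (i+1) := by
    intro i
    have h1 := hlen i
    have h2 : (0:ℝ) < ((2:ℝ)^(N+1))⁻¹ := by positivity
    linarith
  have hfi : ∀ i, i < 2^(N+1) → IntervalIntegrable f volume (a i) (a (i+1)) := fun i hi =>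
    intervalIntegrable_of_Ioc (hai i hi.le).1 (hmono (Nat.le_succ i))
      (hai (i+1) (Nat.succ_le_of_lt hi)).2 hfInt
  have hfi2 : ∀ i, i < 2^(N+1) →
      IntervalIntegrable (fun t => (f t)^2) volume (a i) (a (i+1)) := fun i hi =>
    intervalIntegrable_of_Ioc (hai i hi.le).1 (hmono (Nat.le_succ i))
      (hai (i+1) (Nat.succ_le_of_lt hi)).2 hL2'
  -- local averages
  set c : ℕ → ℝ := fun i => 2^(N+1) * ∫ s in (a i)..(a (i+1)), f s with hcdef
  -- the partial sum equals the local average on each dyadic interval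
  have hps : ∀ i, i < 2^(N+1) → ∀ t, a i ≤ t → t < a (i+1) → haarPartialSum N f t = c i := by
    intro i hi t h1 h2
    have hcast : a (i+1) = ((i:ℝ)+1)/2^(N+1) := by simp only [ha]; push_cast; ring
    have key := partial_sum_eq_avg f hfInt (N+1) i hi t
      (by simpa [ha] using h1) (by rw [← hcast]; exact h2)
    rw [haarPartialSum, key, hcdef]
    simp only [ha]
    push_cast
    ring_nf
  -- congruence on each interval
  have hcong : ∀ i, i < 2^(N+1) →
      ((∫ t in (a i)..(a (i+1)), (f t - haarPartialSum N f t)^2)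
        = ∫ t in (a i)..(a (i+1)), (f t - c i)^2) ∧
      IntervalIntegrable (fun t => (f t - haarPartialSum N f t)^2) volume (a i) (a (i+1)) := by
    intro i hi
    have hle : a i ≤ a (i+1) := (hstrict i).le
    have hae : (fun t => (f t - haarPartialSum N f t)^2)
        =ᵐ[volume.restrict (Set.Ioc (a i) (a (i+1)))] (fun t => (f t - c i)^2) := by
      have hne : ∀ᵐ (t:ℝ) ∂volume, t ≠ a (i+1) := by
        rw [MeasureTheory.ae_iff]
        convert Real.volume_singleton (a := a (i+1)) using 2
        ext x; simp
      filter_upwards [MeasureTheory.ae_restrict_mem measurableSet_Ioc,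
        MeasureTheory.ae_restrict_of_ae hne] with t ht hne'
      have h2 : t < a (i+1) := lt_of_le_of_ne ht.2 hne'
      rw [hps i hi t ht.1.le h2]
    constructor
    · rw [intervalIntegral.integral_of_le hle, intervalIntegral.integral_of_le hle]
      exact MeasureTheory.integral_congr_ae hae
    · rw [intervalIntegrable_iff_integrableOn_Ioc_of_le hle]
      have hI : MeasureTheory.IntegrableOn (fun t => (f t - c i)^2)
          (Set.Ioc (a i) (a (i+1))) volume := by
        rw [← intervalIntegrable_iff_integrableOn_Ioc_of_le hle]
        exact sq_sub_const_integrable (hfi i hi) (hfi2 i hi) (c i)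
      exact hI.congr hae.symm
  -- decompose the integral
  have hsum := intervalIntegral.sum_integral_adjacent_intervals
    (f := fun t => (f t - haarPartialSum N f t)^2) (μ := volume) (a := a)
    (n := 2^(N+1)) (fun i hi => (hcong i hi).2)
  -- variations on pieces
  set W : ℕ → ℝ := fun i => (eVariationOn f (Set.Icc (a i) (a (i+1)))).toReal with hWdef
  have hWBV : ∀ i, i < 2^(N+1) → BoundedVariationOn f (Set.Icc (a i) (a (i+1))) := fun i hi =>
    hBV.mono (Set.Icc_subset_Icc (hai i hi.le).1 (hai (i+1) (Nat.succ_le_of_lt hi)).2)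
  have hW0 : ∀ i, 0 ≤ W i := fun i => ENNReal.toReal_nonneg
  -- per-piece bound
  have hpiece : ∀ i, i < 2^(N+1) →
      (∫ t in a i..a (i+1), (f t - c i)^2) ≤ ((2:ℝ)^(N+1))⁻¹ * (W i/2)^2 := by
    intro i hi
    have key := interval_variance_bound (hstrict i) (hfi i hi) (hfi2 i hi) (hWBV i hi)
    have hc2 : (∫ s in a i..a (i+1), f s)/(a (i+1) - a i) = c i := by
      rw [hlen i, div_eq_mul_inv, inv_inv, hcdef, mul_comm]
    rw [hc2, hlen i] at key
    exact key
  -- sum of variations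
  have hsumVar : ∑ i ∈ Finset.range (2^(N+1)), W i = V := by
    have h1 := sum_eVariation f a hmono (2^(N+1))
    have hfin : ∀ i ∈ Finset.range (2^(N+1)),
        eVariationOn f (Set.Icc (a i) (a (i+1))) ≠ ⊤ := fun i hi =>
      hWBV i (Finset.mem_range.mp hi)
    calc ∑ i ∈ Finset.range (2^(N+1)), W i
        = (∑ i ∈ Finset.range (2^(N+1)), eVariationOn f (Set.Icc (a i) (a (i+1)))).toReal :=
          (ENNReal.toReal_sum hfin).symm
      _ = V := by rw [h1, ha0, ha1]
  -- the main estimate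
  have hmajor : (∫ t in (0:ℝ)..1, (f t - haarPartialSum N f t)^2)
      ≤ (1/4) * (1/2:ℝ)^(N+1) * V^2 := by
    rw [ha0, ha1] at hsum
    rw [← hsum]
    calc ∑ i ∈ Finset.range (2^(N+1)), ∫ t in a i..a (i+1), (f t - haarPartialSum N f t)^2
        ≤ ∑ i ∈ Finset.range (2^(N+1)), ((2:ℝ)^(N+1))⁻¹ * (W i/2)^2 := by
          apply Finset.sum_le_sum
          intro i hi
          rw [(hcong i (Finset.mem_range.mp hi)).1]
          exact hpiece i (Finset.mem_range.mp hi)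
      _ = ((2:ℝ)^(N+1))⁻¹/4 * ∑ i ∈ Finset.range (2^(N+1)), (W i)^2 := by
          rw [Finset.mul_sum]
          apply Finset.sum_congr rfl
          intros; ring
      _ ≤ ((2:ℝ)^(N+1))⁻¹/4 * (∑ i ∈ Finset.range (2^(N+1)), W i)^2 := by
          apply mul_le_mul_of_nonneg_left
            (Finset.sum_sq_le_sq_sum_of_nonneg (fun i _ => hW0 i)) (by positivity)
      _ = (1/4) * (1/2:ℝ)^(N+1) * V^2 := by
          rw [hsumVar, div_pow, one_pow, one_div]
          ring
  -- finish
  have hR0 : 0 ≤ (1/2) * (1/Real.sqrt 2)^N * V := by positivity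
  have hsq : (1/4) * (1/2:ℝ)^(N+1) * V^2 ≤ ((1/2) * (1/Real.sqrt 2)^N * V)^2 := by
    have h2 : ((1/Real.sqrt 2)^N)^2 = (1/2:ℝ)^N := by
      rw [← pow_mul, mul_comm, pow_mul]
      congr 1
      rw [div_pow, one_pow, Real.sq_sqrt (by norm_num : (0:ℝ) ≤ 2)]
    calc (1/4) * (1/2:ℝ)^(N+1) * V^2 ≤ (1/4) * (1/2:ℝ)^N * V^2 := by
          apply mul_le_mul_of_nonneg_right ?_ (sq_nonneg V)
          apply mul_le_mul_of_nonneg_left ?_ (by norm_num)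
          apply pow_le_pow_of_le_one (by norm_num) (by norm_num) (Nat.le_succ N)
      _ = ((1/2) * (1/Real.sqrt 2)^N * V)^2 := by rw [mul_pow, mul_pow, h2]; ring
  calc Real.sqrt (∫ t in (0:ℝ)..1, (f t - haarPartialSum N f t)^2)
      ≤ Real.sqrt (((1/2) * (1/Real.sqrt 2)^N * V)^2) :=
        Real.sqrt_le_sqrt (hmajor.trans hsq)
    _ = (1/2) * (1/Real.sqrt 2)^N * V := Real.sqrt_sq hR0
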